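/- Let U ⊆ ℝⁿ be open and convex, and let φ₀, φ₁ : U → ℝ be twice continuously differentiable with positive definite Hessian matrices D²φ₀(x) and D²φ₁(x) at every x ∈ U. Let W ⊆ ℝⁿ × (0,1) be open, and let ξ, η : W → U be maps, differentiable in the x-variable, satisfying for all (x,t) ∈ W: (1−t)·ξ(x,t) + t·η(x,t) = x and ∇φ₀(ξ(x,t)) = ∇φ₁(η(x,t)). Then for each fixed t the map x ↦ ∇φ₀(ξ(x,t)) is differentiable in x, and its Jacobian matrix equals ((1−t)·(D²φ₀(ξ(x,t)))⁻¹ + t·(D²φ₁(η(x,t)))⁻¹)⁻¹. In particular, if u : W → ℝ is a function whose spatial gradient satisfies ∇ₓu(x,t) = ∇φ₀(ξ(x,t)) on W, then its spatial Hessian is D²ₓₓu(x,t) = ((1−t)·(D²φ₀(ξ(x,t)))⁻¹ + t·(D²φ₁(η(x,t)))⁻¹)⁻¹. -/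

import Mathlib

/-- The gradient of `φ : ℝⁿ → ℝ` at `x`, as the vector of partial derivatives. -/
noncomputable def grad {n : ℕ} (φ : (Fin n → ℝ) → ℝ) (x : Fin n → ℝ) : Fin n → ℝ :=
  fun i => fderiv ℝ φ x (Pi.single i 1)

/-- The Jacobian matrix of a map `g : ℝⁿ → ℝⁿ` at `x`. -/
noncomputable def jacobianMatrix {n : ℕ} (g : (Fin n → ℝ) → Fin n → ℝ)
    (x : Fin n → ℝ) : Matrix (Fin n) (Fin n) ℝ :=
  Matrix.of fun i j => fderiv ℝ g x (Pi.single j 1) i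

/-- The Hessian matrix of `φ : ℝⁿ → ℝ` at `x`. -/
noncomputable def hess {n : ℕ} (φ : (Fin n → ℝ) → ℝ) (x : Fin n → ℝ) :
    Matrix (Fin n) (Fin n) ℝ :=
  jacobianMatrix (grad φ) x

lemma jacobianMatrix_eq {n : ℕ} (g : (Fin n → ℝ) → Fin n → ℝ) (x : Fin n → ℝ) :
    jacobianMatrix g x = LinearMap.toMatrix' (fderiv ℝ g x).toLinearMap := by
  ext i j
  rw [LinearMap.toMatrix'_apply]
  have : (fun j' => if j' = j then (1:ℝ) else 0) = Pi.single j 1 := by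
    funext j'; simp [Pi.single_apply]
  simp [jacobianMatrix, this]

lemma jacobianMatrix_congr {n : ℕ} {f g : (Fin n → ℝ) → Fin n → ℝ} {x : Fin n → ℝ}
    (h : f =ᶠ[nhds x] g) : jacobianMatrix f x = jacobianMatrix g x := by
  unfold jacobianMatrix; rw [h.fderiv_eq]

lemma jacobianMatrix_comp {n : ℕ} {f g : (Fin n → ℝ) → Fin n → ℝ} {x : Fin n → ℝ}
    (hf : DifferentiableAt ℝ f (g x)) (hg : DifferentiableAt ℝ g x) :
    jacobianMatrix (fun y => f (g y)) x = jacobianMatrix f (g x) * jacobianMatrix g x := by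
  rw [jacobianMatrix_eq, jacobianMatrix_eq, jacobianMatrix_eq, ← LinearMap.toMatrix'_comp]
  congr 1
  have h : fderiv ℝ (f ∘ g) x = (fderiv ℝ f (g x)).comp (fderiv ℝ g x) := fderiv_comp x hf hg
  rw [show (fun y => f (g y)) = f ∘ g from rfl, h]
  rfl

theorem stmt5 (n : ℕ) (U : Set (Fin n → ℝ)) (hUo : IsOpen U) (hUc : Convex ℝ U)
    (φ₀ φ₁ : (Fin n → ℝ) → ℝ)
    (hφ₀ : ContDiffOn ℝ 2 φ₀ U) (hφ₁ : ContDiffOn ℝ 2 φ₁ U)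
    (hH₀ : ∀ x ∈ U, (hess φ₀ x).PosDef) (hH₁ : ∀ x ∈ U, (hess φ₁ x).PosDef)
    (W : Set ((Fin n → ℝ) × ℝ)) (hWo : IsOpen W)
    (hWt : ∀ p ∈ W, p.2 ∈ Set.Ioo (0 : ℝ) 1)
    (ξ η : (Fin n → ℝ) × ℝ → Fin n → ℝ)
    (hξU : ∀ p ∈ W, ξ p ∈ U) (hηU : ∀ p ∈ W, η p ∈ U)
    (hξd : ∀ p ∈ W, DifferentiableAt ℝ (fun y => ξ (y, p.2)) p.1)
    (hηd : ∀ p ∈ W, DifferentiableAt ℝ (fun y => η (y, p.2)) p.1)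
    (hseg : ∀ p ∈ W, (1 - p.2) • ξ p + p.2 • η p = p.1)
    (hgrad : ∀ p ∈ W, grad φ₀ (ξ p) = grad φ₁ (η p)) :
    ∀ p ∈ W,
      DifferentiableAt ℝ (fun y => grad φ₀ (ξ (y, p.2))) p.1 ∧
      jacobianMatrix (fun y => grad φ₀ (ξ (y, p.2))) p.1 =
        ((1 - p.2) • (hess φ₀ (ξ p))⁻¹ + p.2 • (hess φ₁ (η p))⁻¹)⁻¹ ∧
      ∀ u : (Fin n → ℝ) × ℝ → ℝ,
        (∀ q ∈ W, grad (fun y => u (y, q.2)) q.1 = grad φ₀ (ξ q)) →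
        hess (fun y => u (y, p.2)) p.1 =
          ((1 - p.2) • (hess φ₀ (ξ p))⁻¹ + p.2 • (hess φ₁ (η p))⁻¹)⁻¹ := by
  -- differentiability of gradients on U
  have hD : ∀ (φ : (Fin n → ℝ) → ℝ), ContDiffOn ℝ 2 φ U →
      ∀ z ∈ U, DifferentiableAt ℝ (grad φ) z := by
    intro φ hφ z hz
    have h1 : ContDiffAt ℝ 2 φ z := hφ.contDiffAt (hUo.mem_nhds hz)
    have h3 : DifferentiableAt ℝ (fderiv ℝ φ) z :=
      (h1.fderiv_right (m := 1) (by norm_num)).differentiableAt one_ne_zero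
    unfold grad
    exact differentiableAt_pi.mpr fun i => h3.clm_apply (differentiableAt_const _)
  rintro ⟨x, t⟩ hp
  have hnhds : {y | (y, t) ∈ W} ∈ nhds x :=
    (hWo.preimage (continuous_id.prodMk continuous_const)).mem_nhds hp
  have hξdx := hξd (x, t) hp
  have hηdx := hηd (x, t) hp
  have hξUx := hξU (x, t) hp
  have hηUx := hηU (x, t) hp
  have hDF : DifferentiableAt ℝ (fun y => grad φ₀ (ξ (y, t))) x :=
    by have := (hD φ₀ hφ₀ (ξ (x, t)) hξUx).comp x hξdx; exact this
  set A := hess φ₀ (ξ (x, t)) with hA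
  set B := hess φ₁ (η (x, t)) with hB
  set Jξ := jacobianMatrix (fun y => ξ (y, t)) x with hJξ
  set Jη := jacobianMatrix (fun y => η (y, t)) x with hJη
  set M := jacobianMatrix (fun y => grad φ₀ (ξ (y, t))) x with hM
  have hM0 : M = A * Jξ := jacobianMatrix_comp (hD φ₀ hφ₀ _ hξUx) hξdx
  have hFG : (fun y => grad φ₀ (ξ (y, t))) =ᶠ[nhds x] (fun y => grad φ₁ (η (y, t))) :=
    Filter.eventuallyEq_of_mem hnhds (fun y hy => hgrad (y, t) hy)
  have hM1 : M = B * Jη := by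
    rw [hM, jacobianMatrix_congr hFG]
    exact jacobianMatrix_comp (hD φ₁ hφ₁ _ hηUx) hηdx
  have hsum : (1 - t) • Jξ + t • Jη = 1 := by
    have hid : (fun y => (1 - t) • ξ (y, t) + t • η (y, t)) =ᶠ[nhds x] (fun y => y) :=
      Filter.eventuallyEq_of_mem hnhds (fun y hy => hseg (y, t) hy)
    have h1 : jacobianMatrix (fun y => (1 - t) • ξ (y, t) + t • η (y, t)) x = 1 := by
      rw [jacobianMatrix_congr hid]
      ext i j
      simp [jacobianMatrix, fderiv_id', Matrix.one_apply, Pi.single_apply, eq_comm]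
    rw [← h1]
    have hfd : fderiv ℝ (fun y => (1 - t) • ξ (y, t) + t • η (y, t)) x =
        (1 - t) • fderiv ℝ (fun y => ξ (y, t)) x + t • fderiv ℝ (fun y => η (y, t)) x := by
      rw [fderiv_fun_add (hξdx.fun_const_smul _) (hηdx.fun_const_smul _),
          fderiv_fun_const_smul hξdx, fderiv_fun_const_smul hηdx]
    ext i j
    simp [jacobianMatrix, hfd, hJξ, hJη]
  have hkey : ((1 - t) • A⁻¹ + t • B⁻¹) * M = 1 := by
    have hAinv : A⁻¹ * A = 1 := Matrix.nonsing_inv_mul A (isUnit_iff_ne_zero.mpr (hH₀ _ hξUx).det_pos.ne')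
    have hBinv : B⁻¹ * B = 1 := Matrix.nonsing_inv_mul B (isUnit_iff_ne_zero.mpr (hH₁ _ hηUx).det_pos.ne')
    have e1 : A⁻¹ * M = Jξ := by rw [hM0, ← Matrix.mul_assoc, hAinv, Matrix.one_mul]
    have e2 : B⁻¹ * M = Jη := by rw [hM1, ← Matrix.mul_assoc, hBinv, Matrix.one_mul]
    rw [Matrix.add_mul, Matrix.smul_mul, Matrix.smul_mul, e1, e2, hsum]
  have hMeq : M = ((1 - t) • A⁻¹ + t • B⁻¹)⁻¹ := (Matrix.inv_eq_right_inv hkey).symm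
  refine ⟨hDF, hMeq, ?_⟩
  intro u hu
  have heq : (grad (fun z => u (z, t))) =ᶠ[nhds x] (fun y => grad φ₀ (ξ (y, t))) :=
    Filter.eventuallyEq_of_mem hnhds (fun y hy => hu (y, t) hy)
  show hess (fun y => u (y, t)) x = _
  unfold hess
  rw [jacobianMatrix_congr heq]
  exact hMeq
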